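/- Every colorable tree T satisfies χ'_irr(T) ≤ 3. -/

import Mathlib

open SimpleGraph

variable {V : Type*}

noncomputable def colorDeg (G : SimpleGraph V) (c : Sym2 V → ℕ) (i : ℕ) (x : V) : ℕ :=
  {y | G.Adj x y ∧ c s(x, y) = i}.ncard

def IsLocIrrColoring (G : SimpleGraph V) (c : Sym2 V → ℕ) : Prop :=
  ∀ x y, G.Adj x y → colorDeg G c (c s(x, y)) x ≠ colorDeg G c (c s(x, y)) y

def IsLIEC (G : SimpleGraph V) (k : ℕ) (c : Sym2 V → ℕ) : Prop :=
  (∀ e ∈ G.edgeSet, c e < k) ∧ IsLocIrrColoring G c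

def IrrColorable (G : SimpleGraph V) : Prop := ∃ k c, IsLIEC G k c

noncomputable def irrChromIndex (G : SimpleGraph V) : ℕ :=
  sInf {k | ∃ c, IsLIEC G k c}

def IsCactus (G : SimpleGraph V) : Prop :=
  ∀ ⦃a b : V⦄ (p : G.Walk a a) (q : G.Walk b b), p.IsCycle → q.IsCycle →
    (∃ e, e ∈ p.edges ∧ e ∈ q.edges) → ∀ e, e ∈ p.edges ↔ e ∈ q.edges

noncomputable def numCycles (G : SimpleGraph V) : ℕ :=
  {s : Set (Sym2 V) | ∃ (w : V) (p : G.Walk w w), p.IsCycle ∧ {e | e ∈ p.edges} = s}.ncard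

set_option linter.unusedSectionVars false
set_option linter.unusedVariables false
set_option linter.unreachableTactic false
set_option linter.unusedTactic false
set_option maxHeartbeats 1000000
namespace LocIrr

open scoped Classical


section Tree
variable [Fintype V] {T : SimpleGraph V}

/-- helper: on a shortest walk to `r`, every interior vertex is strictly closer. -/
lemma dist_lt_of_mem_support (hT : T.IsTree) {x r y : V} (p : T.Walk x r)
    (hp : p.length = T.dist x r) (hy : y ∈ p.support) (hyx : y ≠ x) :
    T.dist y r < T.dist x r := by
  classical
  have hsplit := p.take_spec hy
  have hlen : (p.takeUntil y hy).length + (p.dropUntil y hy).length = p.length := by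
    rw [← Walk.length_append, hsplit]
  have hd : T.dist y r ≤ (p.dropUntil y hy).length := dist_le _
  have ht : 1 ≤ (p.takeUntil y hy).length := by
    by_contra h
    push_neg at h
    interval_cases h' : (p.takeUntil y hy).length
    · exact hyx (Walk.eq_of_length_eq_zero h').symm
  omega

lemma exists_par (hT : T.IsTree) {r x : V} (hx : x ≠ r) :
    ∃ y, T.Adj x y ∧ T.dist y r + 1 = T.dist x r := by
  obtain ⟨p, hp⟩ := hT.isConnected.exists_walk_length_eq_dist x r
  have hd0 : T.dist x r ≠ 0 := by
    intro h
    exact hx (hT.isConnected.dist_eq_zero_iff.mp h)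
  cases p with
  | nil => simp at hp; exact absurd SimpleGraph.dist_self hd0
  | @cons _ y _ hxy q =>
    refine ⟨y, hxy, ?_⟩
    have h1 : T.dist y r ≤ q.length := dist_le q
    have h2 : q.length + 1 = T.dist x r := by
      simpa [Walk.length_cons] using hp
    have h3 : T.dist x r ≤ T.dist x y + T.dist y r := hT.isConnected.dist_triangle
    have h4 : T.dist x y = 1 := dist_eq_one_iff_adj.mpr hxy
    omega

/-- adjacent vertices have distances to `r` differing by exactly one. -/
lemma adj_dist (hT : T.IsTree) {r x y : V} (hxy : T.Adj x y) :
    T.dist y r + 1 = T.dist x r ∨ T.dist x r + 1 = T.dist y r := by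
  have h3 : T.dist x r ≤ T.dist x y + T.dist y r := hT.isConnected.dist_triangle
  have h3' : T.dist y r ≤ T.dist y x + T.dist x r := hT.isConnected.dist_triangle
  have h4 : T.dist x y = 1 := dist_eq_one_iff_adj.mpr hxy
  have h4' : T.dist y x = 1 := dist_eq_one_iff_adj.mpr hxy.symm
  have hne : T.dist x r ≠ T.dist y r := by
    intro he
    obtain ⟨p, hpp, hpl⟩ := hT.isConnected.exists_path_of_dist y r
    obtain ⟨q, hqp, hql⟩ := hT.isConnected.exists_path_of_dist x r
    by_cases hys : y ∈ q.support
    · have := dist_lt_of_mem_support hT q hql hys hxy.ne'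
      omega
    · have hxs : x ∉ p.support := by
        intro hxs
        have := dist_lt_of_mem_support hT p hpl hxs hxy.ne
        omega
      have hP1 : (Walk.cons hxy p).IsPath := hpp.cons hxs
      have := hT.IsAcyclic.path_unique ⟨Walk.cons hxy p, hP1⟩ ⟨q, hqp⟩
      have hlen : (Walk.cons hxy p).length = q.length := by
        rw [show (Walk.cons hxy p) = q from congrArg Subtype.val this]
      simp [Walk.length_cons] at hlen
      omega
  omega

noncomputable def par (hT : T.IsTree) (r : V) (x : V) : V :=
  if h : x = r then x else (exists_par hT h).choose

lemma par_spec (hT : T.IsTree) {r x : V} (hx : x ≠ r) :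
    T.Adj x (par hT r x) ∧ T.dist (par hT r x) r + 1 = T.dist x r := by
  rw [par, dif_neg hx]
  exact (exists_par hT hx).choose_spec

lemma par_uniq (hT : T.IsTree) {r x y : V} (hxy : T.Adj x y)
    (hd : T.dist y r + 1 = T.dist x r) : y = par hT r x := by
  have hx : x ≠ r := by
    intro h; subst h
    simp [SimpleGraph.dist_self] at hd
  obtain ⟨hadj, hd'⟩ := par_spec hT (r := r) hx
  set z := par hT r x with hz
  -- two paths from x to r through y resp z must coincide
  obtain ⟨p, hpp, hpl⟩ := hT.isConnected.exists_path_of_dist y r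
  obtain ⟨q, hqp, hql⟩ := hT.isConnected.exists_path_of_dist z r
  have hxp : x ∉ p.support := by
    intro hxs
    have := dist_lt_of_mem_support hT p hpl hxs hxy.ne
    omega
  have hxq : x ∉ q.support := by
    intro hxs
    have := dist_lt_of_mem_support hT q hql hxs hadj.ne
    omega
  have hP1 : (Walk.cons hxy p).IsPath := hpp.cons hxp
  have hP2 : (Walk.cons hadj q).IsPath := hqp.cons hxq
  have := hT.IsAcyclic.path_unique ⟨Walk.cons hxy p, hP1⟩ ⟨Walk.cons hadj q, hP2⟩
  have hw : (Walk.cons hxy p) = (Walk.cons hadj q : T.Walk x r) :=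
    congrArg Subtype.val this
  have hs := congrArg Walk.support hw
  rw [Walk.support_cons, Walk.support_cons, p.support_eq_cons, q.support_eq_cons] at hs
  simp at hs
  exact (List.cons_eq_cons.mp (p.support_eq_cons.symm.trans (hs.trans q.support_eq_cons))).1

end Tree
section Tree2
variable [Fintype V] {T : SimpleGraph V}

noncomputable def chl (T : SimpleGraph V) (r x : V) : Finset V :=
  Finset.univ.filter (fun y => T.Adj x y ∧ T.dist y r = T.dist x r + 1)

lemma mem_chl {r x y : V} :
    y ∈ chl T r x ↔ T.Adj x y ∧ T.dist y r = T.dist x r + 1 := by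
  simp [chl]


lemma ne_of_dist_ne_zero {r y : V} (h : T.dist y r ≠ 0) : y ≠ r :=
  fun he => h (by rw [he]; exact SimpleGraph.dist_self)

lemma chl_ne_r {r x y : V} (h : y ∈ chl T r x) : y ≠ r := by
  rw [mem_chl] at h
  intro he; subst he
  simp [SimpleGraph.dist_self] at h

lemma chl_par (hT : T.IsTree) {r x y : V} (h : y ∈ chl T r x) : par hT r y = x := by
  rw [mem_chl] at h
  exact (par_uniq hT h.1.symm (by omega)).symm

lemma mem_chl_par (hT : T.IsTree) {r x : V} (hx : x ≠ r) : x ∈ chl T r (par hT r x) := by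
  obtain ⟨hadj, hd⟩ := par_spec hT (r := r) hx
  rw [mem_chl]
  exact ⟨hadj.symm, by omega⟩

/-- the neighbours of `x` are its children and (if `x ≠ r`) its parent. -/
lemma adj_iff (hT : T.IsTree) {r x y : V} :
    T.Adj x y ↔ y ∈ chl T r x ∨ (x ≠ r ∧ y = par hT r x) := by
  constructor
  · intro hxy
    rcases adj_dist hT (r := r) hxy with h | h
    · right
      have hx : x ≠ r := by
        intro he; subst he; simp [SimpleGraph.dist_self] at h
      exact ⟨hx, par_uniq hT hxy h⟩
    · left; rw [mem_chl]; exact ⟨hxy, by omega⟩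
  · rintro (h | ⟨hx, rfl⟩)
    · exact (mem_chl.mp h).1
    · exact (par_spec hT hx).1

def desc (hT : T.IsTree) (r : V) (x : V) : Set V :=
  {y | ∃ k, (par hT r)^[k] y = x ∧ T.dist y r = T.dist x r + k}

lemma self_mem_desc (hT : T.IsTree) (r x : V) : x ∈ desc hT r x := ⟨0, rfl, by simp⟩

lemma dist_le_of_mem_desc (hT : T.IsTree) {r x y : V} (h : y ∈ desc hT r x) :
    T.dist x r ≤ T.dist y r := by
  obtain ⟨k, _, hd⟩ := h; omega

lemma desc_trans (hT : T.IsTree) {r x y z : V} (hzy : z ∈ desc hT r y)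
    (hyx : y ∈ desc hT r x) : z ∈ desc hT r x := by
  obtain ⟨k1, h1, d1⟩ := hzy
  obtain ⟨k2, h2, d2⟩ := hyx
  exact ⟨k2 + k1, by rw [Function.iterate_add_apply, h1, h2], by omega⟩

lemma chl_mem_desc (hT : T.IsTree) {r x t : V} (ht : t ∈ chl T r x) : t ∈ desc hT r x :=
  ⟨1, by simpa using chl_par hT ht, by rw [mem_chl] at ht; omega⟩

lemma chl_desc_sub (hT : T.IsTree) {r x t : V} (ht : t ∈ chl T r x) :
    desc hT r t ⊆ desc hT r x := fun _ hz => desc_trans hT hz (chl_mem_desc hT ht)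

lemma not_mem_desc_chl (hT : T.IsTree) {r x t : V} (ht : t ∈ chl T r x) :
    x ∉ desc hT r t := by
  intro hx
  have h1 := dist_le_of_mem_desc hT hx
  rw [mem_chl] at ht
  omega

lemma desc_ne_r (hT : T.IsTree) {r x y : V} (hy : y ∈ desc hT r x) (hyx : y ≠ x) : y ≠ r := by
  intro he
  have h0 : T.dist y r = 0 := by rw [he]; exact SimpleGraph.dist_self
  obtain ⟨k, hk, hd⟩ := hy
  have hk0 : k = 0 := by omega
  subst hk0
  exact hyx hk

/-- peel one step: a proper descendant's parent is still a descendant. -/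
lemma par_mem_desc (hT : T.IsTree) {r x y : V} (hy : y ∈ desc hT r x) (hyx : y ≠ x) :
    par hT r y ∈ desc hT r x ∧ T.dist (par hT r y) r + 1 = T.dist y r := by
  obtain ⟨k, hk, hd⟩ := hy
  have hk0 : k ≠ 0 := by rintro rfl; exact hyx hk
  obtain ⟨j, rfl⟩ := Nat.exists_eq_succ_of_ne_zero hk0
  have hd0 : T.dist y r ≠ 0 := by omega
  have hyr : y ≠ r := ne_of_dist_ne_zero hd0
  have hps := par_spec hT (r := r) hyr
  refine ⟨⟨j, ?_, by omega⟩, by omega⟩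
  rw [← Function.iterate_succ_apply] ; exact hk

lemma desc_to_chl_aux (hT : T.IsTree) {r x : V} :
    ∀ (j : ℕ) (y : V), (par hT r)^[j+1] y = x → T.dist y r = T.dist x r + (j+1) →
      ∃ t ∈ chl T r x, y ∈ desc hT r t := by
  intro j
  induction j with
  | zero =>
    intro y hk hd
    refine ⟨y, ?_, self_mem_desc hT r y⟩
    simp only [zero_add, Function.iterate_one] at hk
    rw [mem_chl]
    have hd0 : T.dist y r ≠ 0 := by omega
    have hyr : y ≠ r := ne_of_dist_ne_zero hd0
    obtain ⟨hadj, hdd⟩ := par_spec hT (r := r) hyr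
    rw [hk] at hadj hdd
    exact ⟨hadj.symm, by omega⟩
  | succ j ih =>
    intro y hk hd
    have hd0 : T.dist y r ≠ 0 := by omega
    have hyr : y ≠ r := ne_of_dist_ne_zero hd0
    obtain ⟨hadj, hdd⟩ := par_spec hT (r := r) hyr
    have hk' : (par hT r)^[j + 1] (par hT r y) = x := by
      rw [← Function.iterate_succ_apply]; exact hk
    obtain ⟨t, htc, htd⟩ := ih (par hT r y) hk' (by omega)
    refine ⟨t, htc, ?_⟩
    obtain ⟨k1, h1, d1⟩ := htd
    exact ⟨k1 + 1, by rw [Function.iterate_succ_apply, h1], by omega⟩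

/-- every proper descendant of `x` lies in the subtree of a child. -/
lemma desc_to_chl (hT : T.IsTree) {r x y : V} (hy : y ∈ desc hT r x) (hyx : y ≠ x) :
    ∃ t ∈ chl T r x, y ∈ desc hT r t := by
  obtain ⟨k, hk, hd⟩ := hy
  have hk0 : k ≠ 0 := by rintro rfl; exact hyx hk
  obtain ⟨j, rfl⟩ := Nat.exists_eq_succ_of_ne_zero hk0
  exact desc_to_chl_aux hT j y hk hd

lemma chl_desc_disj (hT : T.IsTree) {r x t1 t2 : V} (h1 : t1 ∈ chl T r x)
    (h2 : t2 ∈ chl T r x) {y : V} (hy1 : y ∈ desc hT r t1) (hy2 : y ∈ desc hT r t2) :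
    t1 = t2 := by
  obtain ⟨k1, hk1, hd1⟩ := hy1
  obtain ⟨k2, hk2, hd2⟩ := hy2
  rw [mem_chl] at h1 h2
  have : k1 = k2 := by omega
  subst this
  rw [hk1] at hk2
  exact hk2

lemma iterate_par_dist (hT : T.IsTree) (r : V) :
    ∀ (n : ℕ) (y : V), T.dist y r = n → (par hT r)^[n] y = r := by
  intro n
  induction n with
  | zero => intro y hn; exact hT.isConnected.dist_eq_zero_iff.mp hn
  | succ n ih =>
    intro y hn
    have hd0 : T.dist y r ≠ 0 := by omega
    have hyr : y ≠ r := ne_of_dist_ne_zero hd0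
    obtain ⟨hadj, hd⟩ := par_spec hT (r := r) hyr
    rw [Function.iterate_succ_apply]
    exact ih _ (by omega)

lemma mem_desc_root (hT : T.IsTree) (r y : V) : y ∈ desc hT r r :=
  ⟨T.dist y r, iterate_par_dist hT r _ y rfl, by simp [SimpleGraph.dist_self]⟩

noncomputable def sz (hT : T.IsTree) (r x : V) : ℕ := (desc hT r x).ncard

lemma sz_lt (hT : T.IsTree) {r x t : V} (ht : t ∈ chl T r x) : sz hT r t < sz hT r x := by
  apply Set.ncard_lt_ncard
  · constructor
    · exact chl_desc_sub hT ht
    · intro hsub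
      exact not_mem_desc_chl hT ht (hsub (self_mem_desc hT r x))
  · exact Set.toFinite _

end Tree2
section Tree3
variable [Fintype V] {T : SimpleGraph V}

noncomputable def cdeg (hT : T.IsTree) (r : V) (g : V → ℕ) (i : ℕ) (x : V) : ℕ :=
  ((chl T r x).filter (fun y => g y = i)).card + (if x ≠ r ∧ g x = i then 1 else 0)

def goodAt (hT : T.IsTree) (r : V) (g : V → ℕ) (y : V) : Prop :=
  cdeg hT r g (g y) (par hT r y) ≠ cdeg hT r g (g y) y

def goodBelow (hT : T.IsTree) (r : V) (g : V → ℕ) (x : V) : Prop :=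
  ∀ y ∈ desc hT r x, y ≠ x → goodAt hT r g y

/-- achievable values with 3 colours, parent colour `p`. -/
def A3C (hT : T.IsTree) (r : V) (x : V) (p v : ℕ) : Prop :=
  ∃ g : V → ℕ, g x = p ∧ (∀ y ∈ desc hT r x, y ≠ x → g y < 3) ∧ goodBelow hT r g x ∧
    cdeg hT r g p x = v

/-- achievable values with arbitrary colours. -/
def Bv (hT : T.IsTree) (r : V) (x : V) (v : ℕ) : Prop :=
  ∃ g : V → ℕ, goodBelow hT r g x ∧ cdeg hT r g (g x) x = v

lemma A3C_Bv (hT : T.IsTree) {r x : V} {p v : ℕ} (h : A3C hT r x p v) : Bv hT r x v := by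
  obtain ⟨g, hgx, _, hgood, hval⟩ := h
  exact ⟨g, hgood, by rw [hgx]; exact hval⟩

lemma cdeg_swap (hT : T.IsTree) (r : V) {σ : ℕ → ℕ} (hσ : Function.Injective σ)
    (g : V → ℕ) (i : ℕ) (z : V) : cdeg hT r (σ ∘ g) (σ i) z = cdeg hT r g i z := by
  unfold cdeg
  congr 1
  · have : ((chl T r z).filter fun y => (σ ∘ g) y = σ i) =
        ((chl T r z).filter fun y => g y = i) :=
      Finset.filter_congr (fun y _ => by simp [hσ.eq_iff])
    rw [this]
  · simp [hσ.eq_iff]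

lemma goodBelow_swap (hT : T.IsTree) (r : V) {σ : ℕ → ℕ} (hσ : Function.Injective σ)
    {g : V → ℕ} {x : V} (h : goodBelow hT r g x) : goodBelow hT r (σ ∘ g) x := by
  intro y hy hyx
  have hgy := h y hy hyx
  unfold goodAt at hgy ⊢
  show cdeg hT r (σ ∘ g) (σ (g y)) _ ≠ cdeg hT r (σ ∘ g) (σ (g y)) _
  rw [cdeg_swap hT r hσ, cdeg_swap hT r hσ]
  exact hgy

/-- permute the colours: parent colour 0 can be replaced by any colour `p < 3`. -/
lemma A3C_perm (hT : T.IsTree) {r x : V} {v : ℕ} (h : A3C hT r x 0 v) {p : ℕ} (hp : p < 3) :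
    A3C hT r x p v := by
  obtain ⟨g, hgx, hbd, hgood, hval⟩ := h
  have hswap : ∀ k, k < 3 → Equiv.swap 0 p k < 3 := by
    intro k hk
    rcases eq_or_ne k 0 with rfl | hk0
    · simpa using hp
    · rcases eq_or_ne k p with rfl | hkp
      · simp
      · rw [Equiv.swap_apply_of_ne_of_ne hk0 hkp]; exact hk
  refine ⟨(Equiv.swap 0 p) ∘ g, by simp [hgx], ?_,
    goodBelow_swap hT r (Equiv.injective _) hgood, ?_⟩
  · intro y hy hyx
    exact hswap _ (hbd y hy hyx)
  · have h2 := cdeg_swap hT r (Equiv.injective (Equiv.swap 0 p)) g 0 x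
    rw [Equiv.swap_apply_left] at h2
    rw [h2]
    exact hval

lemma goodBelow_mono (hT : T.IsTree) {r x t : V} (ht : t ∈ chl T r x) {g : V → ℕ}
    (h : goodBelow hT r g x) : goodBelow hT r g t := by
  intro y hy hyt
  refine h y (chl_desc_sub hT ht hy) ?_
  intro he; subst he
  exact not_mem_desc_chl hT ht hy

/-- bridge: an edge colouring related to a vertex colouring has matching colour degrees. -/
lemma colorDeg_eq_cdeg (hT : T.IsTree) {r : V} {c : Sym2 V → ℕ} {g : V → ℕ}
    (hrel : ∀ y : V, y ≠ r → c s(par hT r y, y) = g y) (i : ℕ) (x : V) :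
    colorDeg T c i x = cdeg hT r g i x := by
  classical
  have hset : {y | T.Adj x y ∧ c s(x, y) = i} =
      ↑((chl T r x).filter (fun y => g y = i) ∪
        (if x ≠ r ∧ g x = i then {par hT r x} else ∅)) := by
    ext y
    simp only [Set.mem_setOf_eq, Finset.coe_union, Set.mem_union, Finset.mem_coe,
      Finset.mem_filter]
    constructor
    · rintro ⟨hadj, hc⟩
      rcases (adj_iff hT (r := r)).mp hadj with hy | ⟨hx, rfl⟩
      · left
        refine ⟨hy, ?_⟩
        have hpy : par hT r y = x := chl_par hT hy
        rw [← hrel y (chl_ne_r hy), hpy]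
        exact hc
      · right
        have hcg : c s(x, par hT r x) = g x := by
          rw [Sym2.eq_swap]; exact hrel x hx
        rw [hcg] at hc
        simp [hx, hc]
    · rintro (⟨hy, hgy⟩ | hy)
      · have hpy : par hT r y = x := chl_par hT hy
        refine ⟨(mem_chl.mp hy).1, ?_⟩
        rw [← hpy, hrel y (chl_ne_r hy)]
        exact hgy
      · split_ifs at hy with hcond
        · simp only [Finset.mem_singleton] at hy
          subst hy
          refine ⟨(par_spec hT hcond.1).1, ?_⟩
          rw [Sym2.eq_swap, hrel x hcond.1]
          exact hcond.2
        · simp at hy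
  rw [colorDeg, hset, Set.ncard_coe_finset, Finset.card_union_of_disjoint, cdeg]
  · congr 1
    split_ifs with hcond
    · simp
    · simp
  · rw [Finset.disjoint_left]
    intro a ha1 ha2
    split_ifs at ha2 with hcond
    · simp only [Finset.mem_singleton] at ha2
      subst ha2
      have hb1 := (mem_chl.mp (Finset.mem_filter.mp ha1).1).2
      have hb2 := (par_spec hT hcond.1).2
      omega
    · simp at ha2

/-- the colouring of edges induced by a vertex colouring. -/
noncomputable def colOf (T : SimpleGraph V) (r : V) (g : V → ℕ) : Sym2 V → ℕ :=
  Sym2.lift ⟨fun a b =>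
    if T.dist a r < T.dist b r then g b else if T.dist b r < T.dist a r then g a else 0,
    by
      intro a b
      dsimp only
      split_ifs with h1 h2 h3 <;> first | rfl | omega⟩

lemma colOf_rel (hT : T.IsTree) (r : V) (g : V → ℕ) :
    ∀ y : V, y ≠ r → colOf T r g s(par hT r y, y) = g y := by
  intro y hy
  have hd := (par_spec hT hy).2
  unfold colOf
  rw [Sym2.lift_mk]
  dsimp only
  rw [if_pos (by omega)]

lemma colOf_lt_three (hT : T.IsTree) (r : V) (g : V → ℕ)
    (hg : ∀ y, y ≠ r → g y < 3) (e : Sym2 V) : colOf T r g e < 3 := by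
  induction e with
  | _ a b =>
    unfold colOf
    rw [Sym2.lift_mk]
    dsimp only
    split_ifs with h1 h2
    · exact hg b (ne_of_dist_ne_zero (T := T) (by omega))
    · exact hg a (ne_of_dist_ne_zero (T := T) (by omega))
    · omega

end Tree3
section Tree4
variable [Fintype V] {T : SimpleGraph V}

lemma cdeg_congr (hT : T.IsTree) (r : V) {g g' : V → ℕ} {z : V}
    (h1 : ∀ y ∈ chl T r z, g y = g' y) (h2 : g z = g' z) (i : ℕ) :
    cdeg hT r g i z = cdeg hT r g' i z := by
  unfold cdeg
  congr 1
  · have : ((chl T r z).filter fun y => g y = i) = ((chl T r z).filter fun y => g' y = i) :=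
      Finset.filter_congr (fun y hy => by rw [h1 y hy])
    rw [this]
  · rw [h2]

/-- number of children of `x` given colour `i` by `col`. -/
noncomputable def cnt (T : SimpleGraph V) (r x : V) (col : V → ℕ) (i : ℕ) : ℕ :=
  ((chl T r x).filter (fun s => col s = i)).card

/-- The main gluing lemma: combine colourings of the children subtrees. -/
lemma comb (hT : T.IsTree) {r x : V} (p : ℕ) (col v : V → ℕ)
    (hcol3 : ∀ t ∈ chl T r x, col t < 3)
    (hA : ∀ t ∈ chl T r x, A3C hT r t (col t) (v t))
    (hne : ∀ t ∈ chl T r x,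
      v t ≠ cnt T r x col (col t) + (if x ≠ r ∧ p = col t then 1 else 0)) :
    ∃ G : V → ℕ, G x = p ∧ (∀ y ∈ desc hT r x, y ≠ x → G y < 3) ∧ goodBelow hT r G x ∧
      ∀ i, cdeg hT r G i x = cnt T r x col i + (if x ≠ r ∧ p = i then 1 else 0) := by
  classical
  -- choose a colouring for each child
  have hgf : ∀ t : V, ∃ g : V → ℕ, t ∈ chl T r x →
      (g t = col t ∧ (∀ y ∈ desc hT r t, y ≠ t → g y < 3) ∧ goodBelow hT r g t ∧
        cdeg hT r g (col t) t = v t) := by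
    intro t
    by_cases ht : t ∈ chl T r x
    · obtain ⟨g, h1, h2, h3, h4⟩ := hA t ht
      exact ⟨g, fun _ => ⟨h1, h2, h3, h4⟩⟩
    · exact ⟨fun _ => 0, fun h => absurd h ht⟩
  choose gf hgfs using hgf
  -- the branch of a proper descendant
  have hbr : ∀ y : V, ∃ t : V, y ∈ desc hT r x ∧ y ≠ x → t ∈ chl T r x ∧ y ∈ desc hT r t := by
    intro y
    by_cases hy : y ∈ desc hT r x ∧ y ≠ x
    · obtain ⟨t, ht, hyt⟩ := desc_to_chl hT hy.1 hy.2
      exact ⟨t, fun _ => ⟨ht, hyt⟩⟩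
    · exact ⟨x, fun h => absurd h hy⟩
  choose br hbrs using hbr
  set G : V → ℕ := fun y => if y ∈ desc hT r x ∧ y ≠ x then gf (br y) y else p with hG
  have hGx : G x = p := by simp [hG]
  -- agreement of G with gf t on desc t
  have hagree : ∀ t ∈ chl T r x, ∀ y ∈ desc hT r t, G y = gf t y := by
    intro t ht y hy
    have hyx : y ≠ x := by
      intro he; subst he
      exact not_mem_desc_chl hT ht hy
    have hydx : y ∈ desc hT r x := chl_desc_sub hT ht hy
    rw [hG]
    simp only [hydx, hyx, and_self, if_pos, ne_eq, not_false_eq_true]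
    obtain ⟨hbt, hybt⟩ := hbrs y ⟨hydx, hyx⟩
    rw [chl_desc_disj hT hbt ht hybt hy]
  have hcd : ∀ t ∈ chl T r x, ∀ z ∈ desc hT r t, ∀ i,
      cdeg hT r G i z = cdeg hT r (gf t) i z := by
    intro t ht z hz i
    refine cdeg_congr hT r ?_ ?_ i
    · intro y hy
      exact hagree t ht y (desc_trans hT (chl_mem_desc hT hy) hz)
    · exact hagree t ht z hz
  -- cdeg of G at x
  have hcdx : ∀ i, cdeg hT r G i x = cnt T r x col i + (if x ≠ r ∧ p = i then 1 else 0) := by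
    intro i
    unfold cdeg cnt
    congr 1
    · have : ((chl T r x).filter fun y => G y = i) = ((chl T r x).filter fun s => col s = i) := by
        refine Finset.filter_congr (fun s hs => ?_)
        rw [hagree s hs s (self_mem_desc hT r s), (hgfs s hs).1]
      rw [this]
    · rw [hGx]
  refine ⟨G, hGx, ?_, ?_, hcdx⟩
  · -- bounds
    intro y hy hyx
    obtain ⟨t, ht, hyt⟩ := desc_to_chl hT hy hyx
    rcases eq_or_ne y t with rfl | hne2
    · rw [hagree y ht y (self_mem_desc hT r y), (hgfs y ht).1]
      exact hcol3 y ht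
    · rw [hagree t ht y hyt]
      exact (hgfs t ht).2.1 y hyt hne2
  · -- goodBelow
    intro y hy hyx
    obtain ⟨t, ht, hyt⟩ := desc_to_chl hT hy hyx
    rcases eq_or_ne y t with rfl | hne2
    · -- the child edge itself
      unfold goodAt
      have hpy : par hT r y = x := chl_par hT ht
      have hGy : G y = col y := by
        rw [hagree y ht y (self_mem_desc hT r y), (hgfs y ht).1]
      rw [hpy, hGy]
      rw [hcdx (col y)]
      rw [hcd y ht y (self_mem_desc hT r y)]
      rw [(hgfs y ht).2.2.2]
      exact fun he => hne y ht he.symm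
    · -- edges strictly below the child
      have hgood := (hgfs t ht).2.2.1 y hyt hne2
      unfold goodAt at hgood ⊢
      have hpar : par hT r y ∈ desc hT r t := (par_mem_desc hT hyt hne2).1
      rw [hagree t ht y hyt]
      rw [hcd t ht _ hpar, hcd t ht y hyt]
      exact hgood

end Tree4
section Tree5
variable [Fintype V] {T : SimpleGraph V}

def Flex (hT : T.IsTree) (r x : V) : Prop :=
  ∃ v w, v ≠ w ∧ A3C hT r x 0 v ∧ A3C hT r x 0 w

def Rigid (hT : T.IsTree) (r x : V) (k : ℕ) : Prop :=
  (k = 1 ∨ k = 2) ∧ A3C hT r x 0 k ∧ ∀ w, Bv hT r x w → w = k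

def INV (hT : T.IsTree) (r x : V) : Prop := Flex hT r x ∨ ∃ k, Rigid hT r x k

lemma INV_avoid (hT : T.IsTree) {r t : V} (hINV : INV hT r t) (f : ℕ) :
    (∃ v, v ≠ f ∧ A3C hT r t 0 v) ∨ Rigid hT r t f := by
  rcases hINV with ⟨v, w, hvw, hv, hw⟩ | ⟨k, hk⟩
  · left
    rcases eq_or_ne v f with rfl | hne
    · exact ⟨w, hvw.symm, hw⟩
    · exact ⟨v, hne, hv⟩
  · rcases eq_or_ne k f with rfl | hne
    · right; exact hk
    · left; exact ⟨k, hne, hk.2.1⟩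

lemma INV_pick_big (hT : T.IsTree) {r t : V} (hINV : INV hT r t) {f : ℕ} (hf : 3 ≤ f) :
    ∃ v, v ≠ f ∧ A3C hT r t 0 v := by
  rcases INV_avoid hT hINV f with h | h
  · exact h
  · rcases h.1 with rfl | rfl <;> omega

lemma cnt_const (T : SimpleGraph V) (r x : V) (c0 i : ℕ) :
    cnt T r x (fun _ => c0) i = if c0 = i then (chl T r x).card else 0 := by
  unfold cnt
  split_ifs with h
  · rw [Finset.filter_true_of_mem (fun _ _ => h)]
  · rw [Finset.filter_false_of_mem (fun _ _ => h)]
    exact Finset.card_empty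

/-- scheme: all children get the same colour `c0`. -/
lemma scheme_const (hT : T.IsTree) {r x : V} (hxr : x ≠ r) (c0 : ℕ) (hc0 : c0 < 3)
    (hpick : ∀ t ∈ chl T r x, ∃ v, v ≠ (chl T r x).card + (if c0 = 0 then 1 else 0) ∧
      A3C hT r t 0 v) :
    A3C hT r x 0 ((if c0 = 0 then (chl T r x).card else 0) + 1) := by
  classical
  have hch : ∀ t : V, ∃ v : ℕ, t ∈ chl T r x →
      v ≠ (chl T r x).card + (if c0 = 0 then 1 else 0) ∧ A3C hT r t 0 v := by
    intro t
    by_cases ht : t ∈ chl T r x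
    · obtain ⟨v, hv⟩ := hpick t ht
      exact ⟨v, fun _ => hv⟩
    · exact ⟨0, fun h => absurd h ht⟩
  choose v hv using hch
  obtain ⟨G, hG0, hGbd, hGgood, hGdeg⟩ := comb hT (x := x) 0 (fun _ => c0) v
    (fun t _ => hc0)
    (fun t ht => A3C_perm hT ((hv t ht).2) hc0)
    (by
      intro t ht
      rw [cnt_const]
      simp only [if_pos rfl]
      have := (hv t ht).1
      rcases eq_or_ne c0 0 with rfl | hc
      · simpa [hxr] using this
      · simpa [hxr, hc, Ne.symm hc] using this)
  refine ⟨G, hG0, hGbd, hGgood, ?_⟩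
  rw [hGdeg 0, cnt_const]
  rcases eq_or_ne c0 0 with rfl | hc
  · simp [hxr]
  · simp [hxr, hc, Ne.symm hc]

lemma cnt_pair {T : SimpleGraph V} {r x t1 t2 : V} (hK : chl T r x = {t1, t2})
    (h12 : t1 ≠ t2) {col : V → ℕ} (i : ℕ) :
    cnt T r x col i = (if col t1 = i then 1 else 0) + (if col t2 = i then 1 else 0) := by
  classical
  unfold cnt
  rw [hK]
  rw [Finset.filter_insert, Finset.filter_singleton]
  split_ifs with h1 h2 h2
  · rw [Finset.card_insert_of_notMem (by simp [h12])]
    simp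
  · simp
  · simp
  · simp

/-- scheme for two children with specified colours. -/
lemma scheme_pair (hT : T.IsTree) {r x t1 t2 : V} (hxr : x ≠ r) (hK : chl T r x = {t1, t2})
    (h12 : t1 ≠ t2) (c1 c2 : ℕ) (hc1 : c1 < 3) (hc2 : c2 < 3) (v1 v2 : ℕ)
    (hA1 : A3C hT r t1 0 v1) (hA2 : A3C hT r t2 0 v2)
    (hne1 : v1 ≠ ((if c1 = c1 then 1 else 0) + (if c2 = c1 then 1 else 0)) +
      (if 0 = c1 then 1 else 0))
    (hne2 : v2 ≠ ((if c1 = c2 then 1 else 0) + (if c2 = c2 then 1 else 0)) +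
      (if 0 = c2 then 1 else 0)) :
    A3C hT r x 0 (((if c1 = 0 then 1 else 0) + (if c2 = 0 then 1 else 0)) + 1) := by
  classical
  set col : V → ℕ := fun s => if s = t1 then c1 else c2 with hcol
  set vf : V → ℕ := fun s => if s = t1 then v1 else v2 with hvf
  have hcolt1 : col t1 = c1 := by simp [hcol]
  have hcolt2 : col t2 = c2 := by simp [hcol, h12.symm, if_neg]
  have hmem : ∀ t ∈ chl T r x, t = t1 ∨ t = t2 := by
    intro t ht; rw [hK] at ht; simpa using ht
  obtain ⟨G, hG0, hGbd, hGgood, hGdeg⟩ := comb hT (x := x) 0 col vf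
    (by
      intro t ht
      rcases hmem t ht with rfl | rfl
      · rwa [hcolt1]
      · rwa [hcolt2])
    (by
      intro t ht
      rcases hmem t ht with rfl | rfl
      · have hv : vf t = v1 := by simp [hvf]
        rw [hcolt1, hv]; exact A3C_perm hT hA1 hc1
      · have hv : vf t = v2 := by simp [hvf, h12.symm, if_neg]
        rw [hcolt2, hv]; exact A3C_perm hT hA2 hc2)
    (by
      intro t ht
      rcases hmem t ht with rfl | rfl
      · rw [hcolt1, cnt_pair hK h12, hcolt1, hcolt2]
        simp only [hvf, if_pos rfl]
        simpa [hxr] using hne1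
      · rw [hcolt2, cnt_pair hK h12, hcolt1, hcolt2]
        have : vf t = v2 := by simp [hvf, h12.symm, if_neg]
        rw [this]
        simpa [hxr] using hne2)
  refine ⟨G, hG0, hGbd, hGgood, ?_⟩
  rw [hGdeg 0, cnt_pair hK h12, hcolt1, hcolt2]
  simp [hxr]

end Tree5
section Tree6
variable [Fintype V] {T : SimpleGraph V}

lemma chl_ne_self {r x y : V} (h : y ∈ chl T r x) : y ≠ x := by
  rw [mem_chl] at h
  intro he; subst he; omega

lemma flex_not_rigid (hT : T.IsTree) {r t : V} (hf : Flex hT r t) {k : ℕ} :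
    ¬ Rigid hT r t k := by
  rintro ⟨_, _, huniq⟩
  obtain ⟨v, w, hvw, hv, hw⟩ := hf
  exact hvw ((huniq v (A3C_Bv hT hv)).trans (huniq w (A3C_Bv hT hw)).symm)

lemma flex_pick (hT : T.IsTree) {r t : V} (hf : Flex hT r t) (f : ℕ) :
    ∃ v, v ≠ f ∧ A3C hT r t 0 v :=
  (INV_avoid hT (Or.inl hf) f).resolve_right (flex_not_rigid hT hf)

lemma rigid_eq (hT : T.IsTree) {r t : V} {k k' : ℕ} (h : Rigid hT r t k)
    (h' : Rigid hT r t k') : k = k' :=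
  (h'.2.2 k (A3C_Bv hT h.2.1)).symm ▸ rfl

lemma inv_all (hT : T.IsTree) (r : V) : ∀ n x, x ≠ r → sz hT r x ≤ n → INV hT r x := by
  intro n
  induction n with
  | zero =>
    intro x hx hsz
    exfalso
    have : 0 < sz hT r x := by
      rw [sz, Set.ncard_pos (Set.toFinite _)]
      exact ⟨x, self_mem_desc hT r x⟩
    omega
  | succ n ih =>
    intro x hx hsz
    have hcih : ∀ t ∈ chl T r x, INV hT r t := by
      intro t ht
      have := sz_lt hT ht
      exact ih t (chl_ne_r ht) (by omega)
    by_cases hd0 : (chl T r x).card = 0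
    · -- leaf: rigid with value 1
      have hKe : chl T r x = ∅ := Finset.card_eq_zero.mp hd0
      have hdesc : ∀ y ∈ desc hT r x, y = x := by
        intro y hy
        by_contra hne
        obtain ⟨t, ht, _⟩ := desc_to_chl hT hy hne
        rw [hKe] at ht
        exact absurd ht (Finset.notMem_empty t)
      refine Or.inr ⟨1, Or.inl rfl, ⟨fun _ => 0, rfl, ?_, ?_, ?_⟩, ?_⟩
      · intro y hy hyx; exact absurd (hdesc y hy) hyx
      · intro y hy hyx; exact absurd (hdesc y hy) hyx
      · simp [cdeg, hKe, hx]
      · rintro w ⟨g, hgood, hval⟩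
        simp [cdeg, hKe, hx] at hval
        omega
    by_cases hd1 : (chl T r x).card = 1
    · obtain ⟨t, hKt⟩ := Finset.card_eq_one.mp hd1
      have ht : t ∈ chl T r x := by rw [hKt]; exact Finset.mem_singleton_self t
      have honly : ∀ s ∈ chl T r x, s = t := by
        intro s hs; rw [hKt] at hs; simpa using hs
      rcases hcih t ht with hf | ⟨k, hrig⟩
      · -- flexible child: x is flexible with values {1, 2}
        have hA2 : A3C hT r x 0 2 := by
          have := scheme_const hT hx 0 (by omega) (by
            intro s hs
            obtain ⟨v, hv1, hv2⟩ := flex_pick hT ((honly s hs) ▸ hf) ((chl T r x).card + 1)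
            exact ⟨v, by simpa using hv1, hv2⟩)
          simpa [hd1] using this
        have hA1 : A3C hT r x 0 1 := by
          have := scheme_const hT hx 1 (by omega) (by
            intro s hs
            obtain ⟨v, hv1, hv2⟩ := flex_pick hT ((honly s hs) ▸ hf) ((chl T r x).card)
            exact ⟨v, by simpa using hv1, hv2⟩)
          simpa [hd1] using this
        exact Or.inl ⟨1, 2, by omega, hA1, hA2⟩
      · -- rigid child with value k: x is rigid with value 3 - k
        have hkA : A3C hT r t 0 k := hrig.2.1
        have hkval : k = 1 ∨ k = 2 := hrig.1
        have hBt : ∀ (g : V → ℕ), goodBelow hT r g x → cdeg hT r g (g t) t = k := by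
          intro g hgood
          exact hrig.2.2 _ ⟨g, goodBelow_mono hT ht hgood, rfl⟩
        have hcdx : ∀ (g : V → ℕ) (i : ℕ), cdeg hT r g i x =
            (if g t = i then 1 else 0) + (if g x = i then 1 else 0) := by
          intro g i
          unfold cdeg
          rw [hKt, Finset.filter_singleton]
          by_cases h1 : g t = i <;> by_cases h2 : g x = i <;> simp [h1, h2, hx]
        rcases hkval with rfl | rfl
        · -- k = 1, x rigid 2
          refine Or.inr ⟨2, Or.inr rfl, ?_, ?_⟩
          · have := scheme_const hT hx 0 (by omega) (by
              intro s hs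
              refine ⟨1, by rw [hd1]; norm_num, (honly s hs) ▸ hkA⟩)
            simpa [hd1] using this
          · rintro w ⟨g, hgood, hval⟩
            have h1 := hBt g hgood
            have h2 := hgood t (chl_mem_desc hT ht) (chl_ne_self ht)
            unfold goodAt at h2
            rw [chl_par hT ht, h1, hcdx g (g t)] at h2
            simp only [if_pos rfl] at h2
            have hgxt : g x = g t := by
              by_contra hne
              simp [hne, fun h : g x = g t => hne h] at h2
            rw [hcdx g (g x), hgxt] at hval
            simp at hval
            omega
        · -- k = 2, x rigid 1
          refine Or.inr ⟨1, Or.inl rfl, ?_, ?_⟩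
          · have := scheme_const hT hx 1 (by omega) (by
              intro s hs
              refine ⟨2, by rw [hd1]; norm_num, (honly s hs) ▸ hkA⟩)
            simpa [hd1] using this
          · rintro w ⟨g, hgood, hval⟩
            have h1 := hBt g hgood
            have h2 := hgood t (chl_mem_desc hT ht) (chl_ne_self ht)
            unfold goodAt at h2
            rw [chl_par hT ht, h1, hcdx g (g t)] at h2
            simp only [if_pos rfl] at h2
            have hgxt : g x ≠ g t := by
              intro hne
              simp [hne] at h2
            rw [hcdx g (g x)] at hval
            rw [if_neg (fun h => hgxt h.symm), if_pos rfl] at hval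
            omega
    -- now d ≥ 2 : x is flexible
    · have hd2 : 2 ≤ (chl T r x).card := by omega
      have hbig : A3C hT r x 0 ((chl T r x).card + 1) := by
        have := scheme_const hT hx 0 (by omega) (by
          intro s hs
          refine INV_pick_big hT (hcih s hs) (by simp; omega))
        simpa using this
      suffices hsmall : ∃ v, v ≤ 2 ∧ A3C hT r x 0 v by
        obtain ⟨v, hv2, hvA⟩ := hsmall
        exact Or.inl ⟨v, (chl T r x).card + 1, by omega, hvA, hbig⟩
      by_cases hall2 : ∀ t ∈ chl T r x, ∃ v, v ≠ (chl T r x).card ∧ A3C hT r t 0 v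
      · -- all children can avoid the value d: colour all children 1
        refine ⟨1, by omega, ?_⟩
        have := scheme_const hT hx 1 (by omega) (by
          intro s hs
          obtain ⟨v, hv1, hv2⟩ := hall2 s hs
          exact ⟨v, by simpa using hv1, hv2⟩)
        simpa using this
      -- some child is rigid with value d; then d = 2 (rigid values are ≤ 2)
      · push_neg at hall2
        obtain ⟨t2, ht2, hnot2⟩ := hall2
        have hrig2 : Rigid hT r t2 ((chl T r x).card) := by
          rcases INV_avoid hT (hcih t2 ht2) ((chl T r x).card) with h | h
          · obtain ⟨v, hv1, hv2⟩ := h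
            exact absurd hv2 (hnot2 v hv1)
          · exact h
        have hcard2 : (chl T r x).card = 2 := by
          rcases hrig2.1 with h | h <;> omega
        obtain ⟨a, b, hab, hK⟩ := Finset.card_eq_two.mp hcard2
        -- t2 is rigid with value 2
        rw [hcard2] at hrig2
        by_cases hall1 : ∀ t ∈ chl T r x, ∃ v, v ≠ 1 ∧ A3C hT r t 0 v
        · -- colour children 1 and 2 : value 1
          refine ⟨1, by omega, ?_⟩
          obtain ⟨va, hva1, hvaA⟩ := hall1 a (by rw [hK]; simp)
          obtain ⟨vb, hvb1, hvbA⟩ := hall1 b (by rw [hK]; simp)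
          have := scheme_pair hT hx hK hab 1 2 (by omega) (by omega) va vb hvaA hvbA
            (by simpa using hva1) (by simpa using hvb1)
          simpa using this
        · -- some child rigid with value 1; the other must be t2 (rigid 2)
          push_neg at hall1
          obtain ⟨t1, ht1, hnot1⟩ := hall1
          have hrig1 : Rigid hT r t1 1 := by
            rcases INV_avoid hT (hcih t1 ht1) 1 with h | h
            · obtain ⟨v, hv1, hv2⟩ := h
              exact absurd hv2 (hnot1 v hv1)
            · exact h
          have h12 : t1 ≠ t2 := by
            intro he
            have := rigid_eq hT hrig1 (he ▸ hrig2)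
            omega
          have hK' : chl T r x = {t1, t2} := by
            rw [hK]
            rw [hK] at ht1 ht2
            simp only [Finset.mem_insert, Finset.mem_singleton] at ht1 ht2
            rcases ht1 with rfl | rfl <;> rcases ht2 with rfl | rfl
            · exact absurd rfl h12
            · rfl
            · exact Finset.pair_comm _ _
            · exact absurd rfl h12
          refine ⟨2, by omega, ?_⟩
          have := scheme_pair hT hx hK' h12 0 1 (by omega) (by omega) 1 2
            hrig1.2.1 hrig2.2.1 (by norm_num) (by norm_num)
          simpa using this
end Tree6
section Tree7
variable [Fintype V] {T : SimpleGraph V}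

lemma extract (hT : T.IsTree) (r : V) {c : Sym2 V → ℕ} (hirr : IsLocIrrColoring T c) :
    ∃ g : V → ℕ, (∀ y, y ≠ r → c s(par hT r y, y) = g y) ∧ (∀ y, y ≠ r → goodAt hT r g y) := by
  refine ⟨fun y => c s(par hT r y, y), fun y _ => rfl, ?_⟩
  intro y hy
  have hadj : T.Adj (par hT r y) y := (par_spec hT hy).1.symm
  have hthis := hirr (par hT r y) y hadj
  unfold goodAt
  rw [← colorDeg_eq_cdeg hT (g := fun y => c s(par hT r y, y)) (fun _ _ => rfl),
    ← colorDeg_eq_cdeg hT (g := fun y => c s(par hT r y, y)) (fun _ _ => rfl)]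
  exact hthis

lemma Bv_child (hT : T.IsTree) (r : V) {g : V → ℕ} (hg : ∀ y, y ≠ r → goodAt hT r g y)
    {t : V} (htr : t ≠ r) : Bv hT r t (cdeg hT r g (g t) t) := by
  refine ⟨g, ?_, rfl⟩
  intro y hy hyt
  exact hg y (desc_ne_r hT hy hyt)

/-- assemble a full 3-colouring of the tree from choices at the root. -/
lemma build_coloring (hT : T.IsTree) (r : V) (col v : V → ℕ)
    (hcol3 : ∀ t ∈ chl T r r, col t < 3)
    (hA : ∀ t ∈ chl T r r, A3C hT r t (col t) (v t))
    (hne : ∀ t ∈ chl T r r, v t ≠ cnt T r r col (col t)) :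
    ∃ c, IsLIEC T 3 c := by
  obtain ⟨G, hG0, hGbd, hGgood, _⟩ := comb hT (x := r) 0 col v hcol3 hA
    (by intro t ht; simpa using hne t ht)
  have hrel := colOf_rel hT r G
  have hgood : ∀ y, y ≠ r → goodAt hT r G y := by
    intro y hy
    exact hGgood y (mem_desc_root hT r y) hy
  refine ⟨colOf T r G, ?_, ?_⟩
  · intro e _
    exact colOf_lt_three hT r G (fun y hy => hGbd y (mem_desc_root hT r y) hy) e
  · intro x y hadj
    rcases (adj_iff hT (r := r)).mp hadj with hy | ⟨hxr, rfl⟩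
    · have hpy : par hT r y = x := chl_par hT hy
      have hyr : y ≠ r := chl_ne_r hy
      have hcs : colOf T r G s(x, y) = G y := by rw [← hpy]; exact hrel y hyr
      rw [hcs, colorDeg_eq_cdeg hT hrel, colorDeg_eq_cdeg hT hrel]
      have hga := hgood y hyr
      unfold goodAt at hga
      rw [hpy] at hga
      exact hga
    · have hcs : colOf T r G s(x, par hT r x) = G x := by
        rw [Sym2.eq_swap]; exact hrel x hxr
      rw [hcs, colorDeg_eq_cdeg hT hrel, colorDeg_eq_cdeg hT hrel]
      have hga := hgood x hxr
      unfold goodAt at hga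
      exact hga.symm

lemma cdeg_root_pair (hT : T.IsTree) {r t1 t2 : V} (hK : chl T r r = {t1, t2})
    (h12 : t1 ≠ t2) (g : V → ℕ) (i : ℕ) :
    cdeg hT r g i r = (if g t1 = i then 1 else 0) + (if g t2 = i then 1 else 0) := by
  have : cdeg hT r g i r = cnt T r r g i := by simp [cdeg, cnt]
  rw [this, cnt_pair hK h12]

/-- main existence result: every colourable tree has a locally irregular 3-edge-colouring. -/
lemma exists_lic3 (hT : T.IsTree) (hcol : IrrColorable T) : ∃ c, IsLIEC T 3 c := by
  classical
  have hne : Nonempty V := hT.isConnected.nonempty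
  obtain ⟨r⟩ := hne
  have hINVc : ∀ t ∈ chl T r r, INV hT r t := fun t ht =>
    inv_all hT r (sz hT r t) t (chl_ne_r ht) le_rfl
  obtain ⟨k0, c0, hb0, hirr0⟩ := hcol
  by_cases hm0 : (chl T r r).card = 0
  · -- no edges at all
    have hVr : ∀ x : V, x = r := by
      intro x
      by_contra hx
      obtain ⟨t, ht, _⟩ := desc_to_chl hT (mem_desc_root hT r x) hx
      rw [Finset.card_eq_zero.mp hm0] at ht
      exact absurd ht (Finset.notMem_empty t)
    refine ⟨fun _ => 0, fun e _ => by norm_num, ?_⟩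
    intro x y hadj
    rw [hVr x, hVr y] at hadj
    exact absurd hadj (T.irrefl)
  by_cases hm1 : (chl T r r).card = 1
  · obtain ⟨t, hKt⟩ := Finset.card_eq_one.mp hm1
    have ht : t ∈ chl T r r := by rw [hKt]; exact Finset.mem_singleton_self t
    have hcnt : ∀ i, cnt T r r (fun _ => (0:ℕ)) i = if 0 = i then 1 else 0 := by
      intro i; rw [cnt_const, hm1]
    have hpick : (∃ v, v ≠ 1 ∧ A3C hT r t 0 v) ∨ Rigid hT r t 1 := INV_avoid hT (hINVc t ht) 1
    rcases hpick with ⟨v, hv1, hvA⟩ | hrig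
    · refine build_coloring hT r (fun _ => 0) (fun _ => v) (fun _ _ => by norm_num)
        (fun s hs => ?_) (fun s hs => ?_)
      · have hst : s = t := by rw [hKt] at hs; simpa using hs
        exact hst ▸ hvA
      · rw [hcnt]; simpa using hv1
    · -- rigid child with value 1 at a degree-1 root: contradiction with colourability
      exfalso
      obtain ⟨g, hgrel, hggood⟩ := extract hT r hirr0
      have hBt := Bv_child hT r hggood (chl_ne_r ht)
      have hval : cdeg hT r g (g t) t = 1 := hrig.2.2 _ hBt
      have hga := hggood t (chl_ne_r ht)
      unfold goodAt at hga
      rw [chl_par hT ht, hval] at hga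
      apply hga
      simp [cdeg, hKt, Finset.filter_singleton]
  by_cases hm2 : (chl T r r).card = 2
  · obtain ⟨t1, t2, h12, hK⟩ := Finset.card_eq_two.mp hm2
    have ht1 : t1 ∈ chl T r r := by rw [hK]; simp
    have ht2 : t2 ∈ chl T r r := by rw [hK]; simp
    by_cases hall2 : ∀ t ∈ chl T r r, ∃ v, v ≠ 2 ∧ A3C hT r t 0 v
    · -- colour both children 0
      choose f hf1 hf2 using (fun t (ht : t ∈ chl T r r) => hall2 t ht)
      have hfv : ∀ t : V, ∃ v : ℕ, t ∈ chl T r r → v ≠ 2 ∧ A3C hT r t 0 v := by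
        intro t
        by_cases ht : t ∈ chl T r r
        · exact ⟨f t ht, fun _ => ⟨hf1 t ht, hf2 t ht⟩⟩
        · exact ⟨0, fun h => absurd h ht⟩
      choose vv hvv using hfv
      refine build_coloring hT r (fun _ => 0) vv (fun _ _ => by norm_num)
        (fun s hs => (hvv s hs).2) (fun s hs => ?_)
      rw [cnt_const, hm2]
      simpa using (hvv s hs).1
    · push_neg at hall2
      obtain ⟨ta, hta, hnota⟩ := hall2
      have hriga : Rigid hT r ta 2 := by
        rcases INV_avoid hT (hINVc ta hta) 2 with h | h
        · obtain ⟨v, hv1, hv2⟩ := h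
          exact absurd hv2 (hnota v hv1)
        · exact h
      -- tb is the other child
      obtain ⟨tb, htb, hKab⟩ : ∃ tb, tb ∈ chl T r r ∧ (chl T r r = {ta, tb} ∧ ta ≠ tb) := by
        rw [hK] at hta
        simp only [Finset.mem_insert, Finset.mem_singleton] at hta
        rcases hta with rfl | rfl
        · exact ⟨t2, ht2, hK, h12⟩
        · exact ⟨t1, ht1, by rw [hK]; exact Finset.pair_comm _ _, h12.symm⟩
      obtain ⟨hKp, hab⟩ := hKab
      by_cases hb1 : ∃ v, v ≠ 1 ∧ A3C hT r tb 0 v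
      · -- colour ta with 0 and tb with 1
        obtain ⟨vb, hvb1, hvbA⟩ := hb1
        set col : V → ℕ := fun s => if s = ta then 0 else 1 with hcol
        set vf : V → ℕ := fun s => if s = ta then 2 else vb with hvf
        have hmem : ∀ t ∈ chl T r r, t = ta ∨ t = tb := by
          intro t ht; rw [hKp] at ht; simpa using ht
        refine build_coloring hT r col vf (fun s hs => by rcases hmem s hs with rfl | rfl <;>
            simp [hcol, hab.symm] <;> omega) (fun s hs => ?_) (fun s hs => ?_)
        · rcases hmem s hs with rfl | rfl
          · have h1 : col s = 0 := by simp [hcol]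
            have h2 : vf s = 2 := by simp [hvf]
            rw [h1, h2]; exact hriga.2.1
          · have h1 : col s = 1 := by simp [hcol, hab.symm]
            have h2 : vf s = vb := by simp [hvf, hab.symm]
            rw [h1, h2]; exact A3C_perm hT hvbA (by omega)
        · have hcnt := cnt_pair (T := T) hKp hab (col := col)
          have hca : col ta = 0 := by simp [hcol]
          have hcb : col tb = 1 := by simp [hcol, hab.symm]
          rcases hmem s hs with rfl | rfl
          · rw [hca, hcnt 0, hca, hcb]
            have h2 : vf s = 2 := by simp [hvf]
            rw [h2]; norm_num
          · rw [hcb, hcnt 1, hca, hcb]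
            have h2 : vf s = vb := by simp [hvf, hab.symm]
            rw [h2]; simpa using hvb1
      · -- both children rigid (values 2 and 1): contradiction with colourability
        have hrigb : Rigid hT r tb 1 := by
          rcases INV_avoid hT (hINVc tb htb) 1 with h | h
          · exact absurd h hb1
          · exact h
        exfalso
        obtain ⟨g, hgrel, hggood⟩ := extract hT r hirr0
        have hvala : cdeg hT r g (g ta) ta = 2 :=
          hriga.2.2 _ (Bv_child hT r hggood (chl_ne_r hta))
        have hvalb : cdeg hT r g (g tb) tb = 1 :=
          hrigb.2.2 _ (Bv_child hT r hggood (chl_ne_r htb))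
        have hgaa := hggood ta (chl_ne_r hta)
        have hgab := hggood tb (chl_ne_r htb)
        unfold goodAt at hgaa hgab
        rw [chl_par hT hta, hvala, cdeg_root_pair hT hKp hab] at hgaa
        rw [chl_par hT htb, hvalb, cdeg_root_pair hT hKp hab] at hgab
        by_cases hgg : g ta = g tb
        · apply hgaa; simp [hgg]
        · apply hgab; simp [hgg]
  · -- root degree ≥ 3: colour all children 0
    have hm3 : 3 ≤ (chl T r r).card := by omega
    have hfv : ∀ t : V, ∃ v : ℕ, t ∈ chl T r r →
        v ≠ (chl T r r).card ∧ A3C hT r t 0 v := by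
      intro t
      by_cases ht : t ∈ chl T r r
      · obtain ⟨v, hv1, hv2⟩ := INV_pick_big hT (hINVc t ht) (f := (chl T r r).card) hm3
        exact ⟨v, fun _ => ⟨hv1, hv2⟩⟩
      · exact ⟨0, fun h => absurd h ht⟩
    choose vv hvv using hfv
    refine build_coloring hT r (fun _ => 0) vv (fun _ _ => by norm_num)
      (fun s hs => (hvv s hs).2) (fun s hs => ?_)
    rw [cnt_const]
    simpa using (hvv s hs).1

end Tree7
end LocIrr

theorem colorable_tree_three_colors
    [Fintype V] (T : SimpleGraph V) (hT : T.IsTree) (hcol : IrrColorable T) :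
    irrChromIndex T ≤ 3 := by
  obtain ⟨c, hc⟩ := LocIrr.exists_lic3 hT hcol
  exact Nat.sInf_le ⟨c, hc⟩
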